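/- For all real x, e^{-x} - 1 + x ≥ x²/(2 + |x|), with equality at x = 0. -/

import Mathlib

open Real

/-- Cubic Taylor lower bound for exp on nonneg reals. -/
lemma cubic_le_exp {t : ℝ} (ht : 0 ≤ t) : 1 + t + t ^ 2 / 2 + t ^ 3 / 6 ≤ Real.exp t := by
  have h := Real.sum_le_exp_of_nonneg ht 4
  simp [Finset.sum_range_succ, Nat.factorial] at h
  nlinarith [h]

/-- Key lemma for the nonneg case: `(2+x) e^{-x} ≥ 2 - x` for `x ≥ 0`. -/
lemma key_nonneg {x : ℝ} (hx : 0 ≤ x) : 2 - x ≤ (2 + x) * Real.exp (-x) := by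
  set f : ℝ → ℝ := fun y => (2 + y) * Real.exp (-y) + y with hf
  have hderiv : ∀ y : ℝ, HasDerivAt f (1 - (1 + y) * Real.exp (-y)) y := by
    intro y
    have h1 : HasDerivAt (fun y : ℝ => Real.exp (-y)) (-Real.exp (-y)) y := by
      exact ((Real.hasDerivAt_exp (-y)).comp y (hasDerivAt_neg y)).congr_deriv (by ring)
    have h2 : HasDerivAt (fun y : ℝ => (2 + y) * Real.exp (-y))
        (1 * Real.exp (-y) + (2 + y) * (-Real.exp (-y))) y := by
      exact (((hasDerivAt_const y (2:ℝ)).add (hasDerivAt_id' y)).mul h1).congr_deriv (by simp only [Pi.add_apply]; ring)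
    have := h2.add (hasDerivAt_id y)
    exact this.congr_deriv (by ring)
  have hmono : MonotoneOn f (Set.Ici (0:ℝ)) := by
    apply monotoneOn_of_deriv_nonneg (convex_Ici 0)
      (Continuous.continuousOn (by continuity))
    · intro y _
      exact (hderiv y).differentiableAt.differentiableWithinAt
    · intro y hy
      rw [(hderiv y).deriv]
      have h1 : (1 + y) * Real.exp (-y) ≤ 1 := by
        have := Real.add_one_le_exp y
        have hpos := Real.exp_pos (-y)
        rw [Real.exp_neg]
        rw [mul_inv_le_iff₀ (Real.exp_pos y)]
        linarith
      linarith
  have h0 : f 0 = 2 := by simp [hf]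
  have := hmono (Set.self_mem_Ici) (Set.mem_Ici.mpr hx) hx
  rw [h0] at this
  simp only [hf] at this
  linarith

theorem g_lower_bound :
    (∀ x : ℝ, Real.exp (-x) - 1 + x ≥ x ^ 2 / (2 + |x|)) ∧
    Real.exp (-(0 : ℝ)) - 1 + 0 = (0 : ℝ) ^ 2 / (2 + |(0 : ℝ)|) := by
  constructor
  · intro x
    rcases le_or_gt 0 x with hx | hx
    · rw [abs_of_nonneg hx, ge_iff_le, div_le_iff₀ (by linarith)]
      have h := key_nonneg hx
      have hpos := Real.exp_pos (-x)
      nlinarith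
    · rw [abs_of_neg hx, ge_iff_le, div_le_iff₀ (by linarith)]
      have h := cubic_le_exp (t := -x) (by linarith)
      nlinarith
  · norm_num
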